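/- Let I be a nonempty open real interval, let f : I → ℝ be a three times differentiable function on I with nonvanishing first derivative, and let p = (p₁,p₂) : I → ℝ₊² be twice differentiable on I. Then the third-order partial derivative ∂₁²∂₂A_{f,p} exists on I², and at every diagonal point (x,x) with x ∈ I it equals −(1/4)((p₁−p₂)/p₀)'' − (3p₀(p₁−p₂)/(16p₁p₂))·(((p₁−p₂)/p₀)')² − (1/2)·((p₁p₂/p₀²)·((p₁p₂)'/(p₁p₂) + f''/f'))' + (3p₁p₂/(4p₀²))·((p₁−p₂)/p₀)·((p₁p₂)'/(p₁p₂) + f''/f')² − (p₁p₂/(2p₀²))·((p₁−p₂)/p₀)·S(f), evaluated at x, where p₀ := p₁ + p₂. -/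

import Mathlib

open Set

/-- The 2-variable generalized Bajraktarević mean
`A_{f,p}(x,y) = f⁻¹((p₁(x)f(x)+p₂(y)f(y))/(p₁(x)+p₂(y)))`,
where the inverse of `f` is taken on the interval `I`. -/
noncomputable def bajMean (I : Set ℝ) (f p₁ p₂ : ℝ → ℝ) (x y : ℝ) : ℝ :=
  Function.invFunOn f I ((p₁ x * f x + p₂ y * f y) / (p₁ x + p₂ y))

/-- Partial derivative with respect to the first variable. -/
noncomputable def pd1 (M : ℝ → ℝ → ℝ) (x y : ℝ) : ℝ := deriv (fun t => M t y) x

/-- Partial derivative with respect to the second variable. -/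
noncomputable def pd2 (M : ℝ → ℝ → ℝ) (x y : ℝ) : ℝ := deriv (fun t => M x t) y

/-- The Schwarzian derivative `S(f) = f'''/f' - (3/2) (f''/f')²`. -/
noncomputable def schwarzian (f : ℝ → ℝ) (x : ℝ) : ℝ :=
  deriv (deriv (deriv f)) x / deriv f x - 3 / 2 * (deriv (deriv f) x / deriv f x) ^ 2


noncomputable def hInv (I : Set ℝ) (f : ℝ → ℝ) : ℝ → ℝ := Function.invFunOn f I

lemma injOn_of_deriv {I : Set ℝ} {f : ℝ → ℝ} (hIconn : I.OrdConnected)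
    (hf1 : ∀ x ∈ I, DifferentiableAt ℝ f x) (hf' : ∀ x ∈ I, deriv f x ≠ 0) :
    InjOn f I := by
  intro a ha b hb hab
  by_contra hne
  wlog hlt : a < b generalizing a b
  · exact this hb ha hab.symm (Ne.symm hne) (lt_of_le_of_ne (not_lt.1 hlt) (Ne.symm hne))
  have hIcc : Icc a b ⊆ I := hIconn.out ha hb
  have hcont : ContinuousOn f (Icc a b) := fun t ht =>
    ((hf1 t (hIcc ht)).continuousAt).continuousWithinAt
  obtain ⟨c, hc, hc0⟩ := exists_deriv_eq_zero hlt hcont hab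
  exact hf' c (hIcc (Ioo_subset_Icc_self hc)) hc0

lemma strictAntiOn_continuousAt {g : ℝ → ℝ} {s : Set ℝ} {a : ℝ}
    (h_anti : StrictAntiOn g s) (hs : s ∈ nhds a) (hgs : g '' s ∈ nhds (g a)) :
    ContinuousAt g a := by
  have hmono : StrictMonoOn (fun w => -g w) s := fun x hx y hy hxy =>
    neg_lt_neg (h_anti hx hy hxy)
  have himg : (fun w => -g w) '' s ∈ nhds (-(g a)) := by
    have h1 : Neg.neg '' (g '' s) ∈ nhds (-(g a)) :=
      (Homeomorph.neg ℝ).isOpenMap.image_mem_nhds hgs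
    have h2 : (fun w => -g w) '' s = Neg.neg '' (g '' s) := by
      rw [Set.image_image]
    rwa [h2]
  have hc : ContinuousAt (fun w => -g w) a :=
    hmono.continuousAt_of_image_mem_nhds hs himg
  convert hc.neg using 1
  funext w; simp

lemma hInv_apply {I : Set ℝ} {f : ℝ → ℝ} (hinj : InjOn f I) {c : ℝ} (hc : c ∈ I) :
    hInv I f (f c) = c := hinj.leftInvOn_invFunOn hc

lemma hasDerivAt_hInv {I : Set ℝ} {f : ℝ → ℝ} (hIopen : IsOpen I) (hIconn : I.OrdConnected)
    (hf1 : ∀ x ∈ I, DifferentiableAt ℝ f x) (hf' : ∀ x ∈ I, deriv f x ≠ 0)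
    {c : ℝ} (hc : c ∈ I) : HasDerivAt (hInv I f) ((deriv f c)⁻¹) (f c) := by
  have hinj : InjOn f I := injOn_of_deriv hIconn hf1 hf'
  obtain ⟨l, u, hlu, hsub⟩ := mem_nhds_iff_exists_Ioo_subset.1 (hIopen.mem_nhds hc)
  obtain ⟨a, hla, hac⟩ := exists_between hlu.1
  obtain ⟨b, hcb, hbu⟩ := exists_between hlu.2
  have hIcc : Icc a b ⊆ I := fun t ht => hsub ⟨lt_of_lt_of_le hla ht.1, lt_of_le_of_lt ht.2 hbu⟩
  have hab : a ≤ b := (hac.trans hcb).le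
  have hcont : ContinuousOn f (Icc a b) := fun t ht =>
    ((hf1 t (hIcc ht)).continuousAt).continuousWithinAt
  have hmem : c ∈ Icc a b := ⟨hac.le, hcb.le⟩
  have hfc : hInv I f (f c) = c := hInv_apply hinj hc
  have key : ContinuousAt (hInv I f) (f c) ∧ (∀ᶠ w in nhds (f c), f (hInv I f w) = w) := by
    rcases hcont.strictMonoOn_of_injOn_Icc' hab (hinj.mono hIcc) with hmono | hanti
    · have hzV : f c ∈ Ioo (f a) (f b) :=
        ⟨hmono (left_mem_Icc.2 hab) hmem hac, hmono hmem (right_mem_Icc.2 hab) hcb⟩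
      have hVnhds : Ioo (f a) (f b) ∈ nhds (f c) := isOpen_Ioo.mem_nhds hzV
      have hpre : ∀ w ∈ Ioo (f a) (f b), ∃ u ∈ Ioo a b, f u = w := fun w hw => by
        obtain ⟨u, hu, hfu⟩ := intermediate_value_Ioo hab hcont hw
        exact ⟨u, hu, hfu⟩
      have hhV : ∀ w ∈ Ioo (f a) (f b), hInv I f w ∈ Ioo a b ∧ f (hInv I f w) = w := by
        intro w hw
        obtain ⟨u, hu, rfl⟩ := hpre w hw
        have heq : hInv I f (f u) = u := hInv_apply hinj (hIcc (Ioo_subset_Icc_self hu))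
        rw [heq]; exact ⟨hu, rfl⟩
      have hright : ∀ᶠ w in nhds (f c), f (hInv I f w) = w :=
        Filter.eventually_of_mem hVnhds (fun w hw => (hhV w hw).2)
      have hmonoh : StrictMonoOn (hInv I f) (Ioo (f a) (f b)) := by
        intro w1 h1 w2 h2 h12
        obtain ⟨m1, e1⟩ := hhV w1 h1
        obtain ⟨m2, e2⟩ := hhV w2 h2
        by_contra hle
        push_neg at hle
        rcases hle.lt_or_eq with hlt | heq
        · have := hmono (Ioo_subset_Icc_self m2) (Ioo_subset_Icc_self m1) hlt
          rw [e1, e2] at this; exact absurd h12 (not_lt.2 this.le)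
        · have : w2 = w1 := by rw [← e1, ← e2, heq]
          exact absurd h12 (by rw [this]; exact lt_irrefl _)
      have himage : hInv I f '' (Ioo (f a) (f b)) ∈ nhds (hInv I f (f c)) := by
        rw [hfc]
        refine Filter.mem_of_superset (isOpen_Ioo.mem_nhds ⟨hac, hcb⟩) ?_
        intro t ht
        have htI : f t ∈ Ioo (f a) (f b) :=
          ⟨hmono (left_mem_Icc.2 hab) (Ioo_subset_Icc_self ht) ht.1,
           hmono (Ioo_subset_Icc_self ht) (right_mem_Icc.2 hab) ht.2⟩
        exact ⟨f t, htI, hInv_apply hinj (hIcc (Ioo_subset_Icc_self ht))⟩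
      exact ⟨hmonoh.continuousAt_of_image_mem_nhds hVnhds himage, hright⟩
    · have hzV : f c ∈ Ioo (f b) (f a) :=
        ⟨hanti hmem (right_mem_Icc.2 hab) hcb, hanti (left_mem_Icc.2 hab) hmem hac⟩
      have hVnhds : Ioo (f b) (f a) ∈ nhds (f c) := isOpen_Ioo.mem_nhds hzV
      have hpre : ∀ w ∈ Ioo (f b) (f a), ∃ u ∈ Ioo a b, f u = w := fun w hw => by
        obtain ⟨u, hu, hfu⟩ := intermediate_value_Ioo' hab hcont hw
        exact ⟨u, hu, hfu⟩
      have hhV : ∀ w ∈ Ioo (f b) (f a), hInv I f w ∈ Ioo a b ∧ f (hInv I f w) = w := by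
        intro w hw
        obtain ⟨u, hu, rfl⟩ := hpre w hw
        have heq : hInv I f (f u) = u := hInv_apply hinj (hIcc (Ioo_subset_Icc_self hu))
        rw [heq]; exact ⟨hu, rfl⟩
      have hright : ∀ᶠ w in nhds (f c), f (hInv I f w) = w :=
        Filter.eventually_of_mem hVnhds (fun w hw => (hhV w hw).2)
      have hantih : StrictAntiOn (hInv I f) (Ioo (f b) (f a)) := by
        intro w1 h1 w2 h2 h12
        obtain ⟨m1, e1⟩ := hhV w1 h1
        obtain ⟨m2, e2⟩ := hhV w2 h2
        by_contra hle
        push_neg at hle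
        rcases hle.lt_or_eq with hlt | heq
        · have := hanti (Ioo_subset_Icc_self m1) (Ioo_subset_Icc_self m2) hlt
          rw [e1, e2] at this; exact absurd h12 (not_lt.2 this.le)
        · have : w1 = w2 := by rw [← e1, ← e2, heq]
          exact absurd h12 (by rw [this]; exact lt_irrefl _)
      have himage : hInv I f '' (Ioo (f b) (f a)) ∈ nhds (hInv I f (f c)) := by
        rw [hfc]
        refine Filter.mem_of_superset (isOpen_Ioo.mem_nhds ⟨hac, hcb⟩) ?_
        intro t ht
        have htI : f t ∈ Ioo (f b) (f a) :=
          ⟨hanti (Ioo_subset_Icc_self ht) (right_mem_Icc.2 hab) ht.2,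
           hanti (left_mem_Icc.2 hab) (Ioo_subset_Icc_self ht) ht.1⟩
        exact ⟨f t, htI, hInv_apply hinj (hIcc (Ioo_subset_Icc_self ht))⟩
      exact ⟨strictAntiOn_continuousAt hantih hVnhds himage, hright⟩
  exact HasDerivAt.of_local_left_inverse key.1
    (by rw [hfc]; exact (hf1 c hc).hasDerivAt) (hf' c hc) key.2
noncomputable def gg (f p₁ p₂ : ℝ → ℝ) (x y : ℝ) : ℝ :=
  (p₁ x * f x + p₂ y * f y) / (p₁ x + p₂ y)

noncomputable def Hh1 (I : Set ℝ) (f : ℝ → ℝ) (z : ℝ) : ℝ := (deriv f (hInv I f z))⁻¹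

noncomputable def Hh2 (I : Set ℝ) (f : ℝ → ℝ) (z : ℝ) : ℝ :=
  -(deriv (deriv f) (hInv I f z)) / (deriv f (hInv I f z)) ^ 3

noncomputable def Hh3 (I : Set ℝ) (f : ℝ → ℝ) (z : ℝ) : ℝ :=
  (3 * (deriv (deriv f) (hInv I f z)) ^ 2
    - deriv (deriv (deriv f)) (hInv I f z) * deriv f (hInv I f z)) / (deriv f (hInv I f z)) ^ 5

lemma gg_mem {I : Set ℝ} {f p₁ p₂ : ℝ → ℝ} (hIconn : I.OrdConnected)
    (hf1 : ∀ x ∈ I, DifferentiableAt ℝ f x)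
    (hp : ∀ x ∈ I, 0 < p₁ x ∧ 0 < p₂ x)
    {x y : ℝ} (hx : x ∈ I) (hy : y ∈ I) : ∃ c ∈ I, f c = gg f p₁ p₂ x y := by
  have hS : 0 < p₁ x + p₂ y := add_pos (hp x hx).1 (hp y hy).2
  have hpre : IsPreconnected I := hIconn.isPreconnected
  have himg : IsPreconnected (f '' I) :=
    hpre.image f (fun t ht => ((hf1 t ht).continuousAt).continuousWithinAt)
  have hU : OrdConnected (f '' I) := himg.ordConnected
  have hsub : uIcc (f x) (f y) ⊆ f '' I :=
    hU.uIcc_subset (mem_image_of_mem f hx) (mem_image_of_mem f hy)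
  have hmem : gg f p₁ p₂ x y ∈ uIcc (f x) (f y) := by
    rw [Set.mem_uIcc]
    rcases le_total (f x) (f y) with hle | hle
    · left
      constructor
      · rw [gg, le_div_iff₀ hS]; nlinarith [(hp y hy).2, (hp x hx).1]
      · rw [gg, div_le_iff₀ hS]; nlinarith [(hp y hy).2, (hp x hx).1]
    · right
      constructor
      · rw [gg, le_div_iff₀ hS]; nlinarith [(hp y hy).2, (hp x hx).1]
      · rw [gg, div_le_iff₀ hS]; nlinarith [(hp y hy).2, (hp x hx).1]
  obtain ⟨c, hc, hfc⟩ := hsub hmem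
  exact ⟨c, hc, hfc⟩

section HDeriv

variable {I : Set ℝ} {f : ℝ → ℝ}
variable (hIopen : IsOpen I) (hIconn : I.OrdConnected)
  (hf1 : ∀ x ∈ I, DifferentiableAt ℝ f x)
  (hf2 : ∀ x ∈ I, DifferentiableAt ℝ (deriv f) x)
  (hf3 : ∀ x ∈ I, DifferentiableAt ℝ (deriv (deriv f)) x)
  (hf' : ∀ x ∈ I, deriv f x ≠ 0)

omit hIopen in
include hIconn hf1 hf' in
lemma Hh1_eq {c : ℝ} (hc : c ∈ I) : Hh1 I f (f c) = (deriv f c)⁻¹ := by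
  rw [Hh1, hInv_apply (injOn_of_deriv hIconn hf1 hf') hc]

omit hIopen in
include hIconn hf1 hf' in
lemma Hh2_eq {c : ℝ} (hc : c ∈ I) :
    Hh2 I f (f c) = -(deriv (deriv f) c) / (deriv f c) ^ 3 := by
  rw [Hh2, hInv_apply (injOn_of_deriv hIconn hf1 hf') hc]

omit hIopen in
include hIconn hf1 hf' in
lemma Hh3_eq {c : ℝ} (hc : c ∈ I) :
    Hh3 I f (f c) = (3 * (deriv (deriv f) c) ^ 2
      - deriv (deriv (deriv f)) c * deriv f c) / (deriv f c) ^ 5 := by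
  rw [Hh3, hInv_apply (injOn_of_deriv hIconn hf1 hf') hc]

include hIopen hIconn hf1 hf2 hf' in
lemma hasDerivAt_Hh1 {c : ℝ} (hc : c ∈ I) :
    HasDerivAt (Hh1 I f) (Hh2 I f (f c)) (f c) := by
  have hinj := injOn_of_deriv hIconn hf1 hf'
  have hh := hasDerivAt_hInv hIopen hIconn hf1 hf' hc
  have hfix : hInv I f (f c) = c := hInv_apply hinj hc
  have hcomp : HasDerivAt (fun z => deriv f (hInv I f z))
      (deriv (deriv f) c * (deriv f c)⁻¹) (f c) := by
    have houter : HasDerivAt (deriv f) (deriv (deriv f) c) (hInv I f (f c)) := by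
      rw [hfix]; exact (hf2 c hc).hasDerivAt
    have := houter.comp (f c) hh
    exact this
  have hne : deriv f (hInv I f (f c)) ≠ 0 := by
    rw [hInv_apply hinj hc]; exact hf' c hc
  have := hcomp.inv hne
  have heq : Hh1 I f = fun z => (deriv f (hInv I f z))⁻¹ := rfl
  rw [heq]
  refine this.congr_deriv ?_
  rw [Hh2_eq hIconn hf1 hf' hc, hInv_apply hinj hc]
  field_simp

include hIopen hIconn hf1 hf2 hf3 hf' in
lemma hasDerivAt_Hh2 {c : ℝ} (hc : c ∈ I) :
    HasDerivAt (Hh2 I f) (Hh3 I f (f c)) (f c) := by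
  have hinj := injOn_of_deriv hIconn hf1 hf'
  have hh := hasDerivAt_hInv hIopen hIconn hf1 hf' hc
  have hh' : HasDerivAt (hInv I f) ((deriv f c)⁻¹) (f c) := hh
  have hfix : hInv I f (f c) = c := hInv_apply hinj hc
  have hcompA : HasDerivAt (fun z => deriv (deriv f) (hInv I f z))
      (deriv (deriv (deriv f)) c * (deriv f c)⁻¹) (f c) := by
    have houter : HasDerivAt (deriv (deriv f)) (deriv (deriv (deriv f)) c) (hInv I f (f c)) := by
      rw [hfix]; exact (hf3 c hc).hasDerivAt
    have := houter.comp (f c) hh'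
    exact this
  have hcompB : HasDerivAt (fun z => deriv f (hInv I f z))
      (deriv (deriv f) c * (deriv f c)⁻¹) (f c) := by
    have houter : HasDerivAt (deriv f) (deriv (deriv f) c) (hInv I f (f c)) := by
      rw [hfix]; exact (hf2 c hc).hasDerivAt
    have := houter.comp (f c) hh'
    exact this
  have hne : deriv f (hInv I f (f c)) ≠ 0 := by
    rw [hInv_apply hinj hc]; exact hf' c hc
  have hpow : HasDerivAt (fun z => (deriv f (hInv I f z)) ^ 3)
      (3 * (deriv f (hInv I f (f c))) ^ 2 * (deriv (deriv f) c * (deriv f c)⁻¹)) (f c) := by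
    have := hcompB.fun_pow 3
    simpa using this
  have hne3 : (deriv f (hInv I f (f c))) ^ 3 ≠ 0 := pow_ne_zero _ hne
  have hdiv := (hcompA.neg).div hpow hne3
  have heq : Hh2 I f = fun z => -(deriv (deriv f) (hInv I f z)) / (deriv f (hInv I f z)) ^ 3 := rfl
  rw [heq]
  refine hdiv.congr_deriv ?_
  rw [Hh3_eq hIconn hf1 hf' hc, hInv_apply hinj hc]
  simp only [Pi.neg_apply, hfix]
  have h1 : deriv f c ≠ 0 := hf' c hc
  field_simp
  ring

end HDeriv
noncomputable def Gc (f p₂ : ℝ → ℝ) (y : ℝ) : ℝ := deriv p₂ y * f y + p₂ y * deriv f y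
noncomputable def Gw (f p₁ : ℝ → ℝ) (x : ℝ) : ℝ := deriv p₁ x * f x + p₁ x * deriv f x
noncomputable def Gv (f p₁ : ℝ → ℝ) (x : ℝ) : ℝ :=
  deriv (deriv p₁) x * f x + 2 * (deriv p₁ x * deriv f x) + p₁ x * deriv (deriv f) x
noncomputable def SS (p₁ p₂ : ℝ → ℝ) (x y : ℝ) : ℝ := p₁ x + p₂ y
noncomputable def NN (f p₁ p₂ : ℝ → ℝ) (x y : ℝ) : ℝ := p₁ x * f x + p₂ y * f y
noncomputable def G01 (f p₁ p₂ : ℝ → ℝ) (x y : ℝ) : ℝ :=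
  (Gc f p₂ y * SS p₁ p₂ x y - NN f p₁ p₂ x y * deriv p₂ y) / SS p₁ p₂ x y ^ 2
noncomputable def G10 (f p₁ p₂ : ℝ → ℝ) (x y : ℝ) : ℝ :=
  (Gw f p₁ x * SS p₁ p₂ x y - NN f p₁ p₂ x y * deriv p₁ x) / SS p₁ p₂ x y ^ 2
noncomputable def Gn (f p₁ p₂ : ℝ → ℝ) (x y : ℝ) : ℝ :=
  (Gc f p₂ y * deriv p₁ x - Gw f p₁ x * deriv p₂ y) * SS p₁ p₂ x y
    - 2 * deriv p₁ x * (Gc f p₂ y * SS p₁ p₂ x y - NN f p₁ p₂ x y * deriv p₂ y)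
noncomputable def G11 (f p₁ p₂ : ℝ → ℝ) (x y : ℝ) : ℝ := Gn f p₁ p₂ x y / SS p₁ p₂ x y ^ 3
noncomputable def G20 (f p₁ p₂ : ℝ → ℝ) (x y : ℝ) : ℝ :=
  ((Gv f p₁ x * SS p₁ p₂ x y - NN f p₁ p₂ x y * deriv (deriv p₁) x) * SS p₁ p₂ x y
    - 2 * deriv p₁ x * (Gw f p₁ x * SS p₁ p₂ x y - NN f p₁ p₂ x y * deriv p₁ x))
    / SS p₁ p₂ x y ^ 3
noncomputable def Gnp (f p₁ p₂ : ℝ → ℝ) (x y : ℝ) : ℝ :=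
  (Gc f p₂ y * deriv (deriv p₁) x - Gv f p₁ x * deriv p₂ y) * SS p₁ p₂ x y
    + (Gc f p₂ y * deriv p₁ x - Gw f p₁ x * deriv p₂ y) * deriv p₁ x
    - 2 * deriv (deriv p₁) x * (Gc f p₂ y * SS p₁ p₂ x y - NN f p₁ p₂ x y * deriv p₂ y)
    - 2 * deriv p₁ x * (Gc f p₂ y * deriv p₁ x - Gw f p₁ x * deriv p₂ y)
noncomputable def G21 (f p₁ p₂ : ℝ → ℝ) (x y : ℝ) : ℝ :=
  (Gnp f p₁ p₂ x y * SS p₁ p₂ x y - 3 * deriv p₁ x * Gn f p₁ p₂ x y) / SS p₁ p₂ x y ^ 4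

section GDeriv

variable {I : Set ℝ} {f p₁ p₂ : ℝ → ℝ}
variable (hf1 : ∀ x ∈ I, DifferentiableAt ℝ f x)
  (hf2 : ∀ x ∈ I, DifferentiableAt ℝ (deriv f) x)
  (hp : ∀ x ∈ I, 0 < p₁ x ∧ 0 < p₂ x)
  (hp1d : ∀ x ∈ I, DifferentiableAt ℝ p₁ x)
  (hp1d2 : ∀ x ∈ I, DifferentiableAt ℝ (deriv p₁) x)
  (hp2d : ∀ x ∈ I, DifferentiableAt ℝ p₂ x)
  {x y : ℝ} (hx : x ∈ I) (hy : y ∈ I)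

include hp hx hy in
lemma SS_ne : SS p₁ p₂ x y ≠ 0 :=
  ne_of_gt (add_pos (hp x hx).1 (hp y hy).2)

include hf1 hp hp2d hx hy in
lemma hasDerivAt_gg_y :
    HasDerivAt (fun t => gg f p₁ p₂ x t) (G01 f p₁ p₂ x y) y := by
  have hS := SS_ne hp hx hy
  rw [SS] at hS
  have hnum : HasDerivAt (fun t => p₁ x * f x + p₂ t * f t)
      (deriv p₂ y * f y + p₂ y * deriv f y) y :=
    HasDerivAt.const_add _ (((hp2d y hy).hasDerivAt).mul ((hf1 y hy).hasDerivAt))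
  have hden : HasDerivAt (fun t => p₁ x + p₂ t) (deriv p₂ y) y :=
    HasDerivAt.const_add _ (hp2d y hy).hasDerivAt
  have := hnum.div hden hS
  simp only [gg, G01, SS, NN, Gc]
  exact this

include hf1 hp hp1d hx hy in
lemma hasDerivAt_gg_x :
    HasDerivAt (fun t => gg f p₁ p₂ t y) (G10 f p₁ p₂ x y) x := by
  have hS := SS_ne hp hx hy
  rw [SS] at hS
  have hnum : HasDerivAt (fun t => p₁ t * f t + p₂ y * f y)
      (deriv p₁ x * f x + p₁ x * deriv f x) x :=
    HasDerivAt.add_const _ (((hp1d x hx).hasDerivAt).mul ((hf1 x hx).hasDerivAt))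
  have hden : HasDerivAt (fun t => p₁ t + p₂ y) (deriv p₁ x) x :=
    HasDerivAt.add_const _ (hp1d x hx).hasDerivAt
  have := hnum.div hden hS
  simp only [gg, G10, SS, NN, Gw]
  exact this

include hf1 hp hp1d hp2d hx hy in
lemma hasDerivAt_G01_x :
    HasDerivAt (fun t => G01 f p₁ p₂ t y) (G11 f p₁ p₂ x y) x := by
  have hS := SS_ne hp hx hy
  rw [SS] at hS
  have hSd : HasDerivAt (fun t => p₁ t + p₂ y) (deriv p₁ x) x :=
    HasDerivAt.add_const _ (hp1d x hx).hasDerivAt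
  have hNd : HasDerivAt (fun t => p₁ t * f t + p₂ y * f y)
      (deriv p₁ x * f x + p₁ x * deriv f x) x :=
    HasDerivAt.add_const _ (((hp1d x hx).hasDerivAt).mul ((hf1 x hx).hasDerivAt))
  have hnum : HasDerivAt
      (fun t => Gc f p₂ y * (p₁ t + p₂ y) - (p₁ t * f t + p₂ y * f y) * deriv p₂ y)
      (Gc f p₂ y * deriv p₁ x - (deriv p₁ x * f x + p₁ x * deriv f x) * deriv p₂ y) x :=
    (hSd.const_mul _).sub (hNd.mul_const _)
  have hden : HasDerivAt (fun t => (p₁ t + p₂ y) ^ 2)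
      (2 * (p₁ x + p₂ y) ^ 1 * deriv p₁ x) x := by
    have := hSd.fun_pow 2
    simpa using this
  have hdiv := hnum.div hden (pow_ne_zero 2 hS)
  simp only [G01, G11, Gn, SS, NN, Gc, Gw] at hdiv ⊢
  refine hdiv.congr_deriv ?_
  field_simp

include hf1 hf2 hp hp1d hp1d2 hx hy in
lemma hasDerivAt_G10_x :
    HasDerivAt (fun t => G10 f p₁ p₂ t y) (G20 f p₁ p₂ x y) x := by
  have hS := SS_ne hp hx hy
  rw [SS] at hS
  have hSd : HasDerivAt (fun t => p₁ t + p₂ y) (deriv p₁ x) x :=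
    HasDerivAt.add_const _ (hp1d x hx).hasDerivAt
  have hNd : HasDerivAt (fun t => p₁ t * f t + p₂ y * f y)
      (deriv p₁ x * f x + p₁ x * deriv f x) x :=
    HasDerivAt.add_const _ (((hp1d x hx).hasDerivAt).mul ((hf1 x hx).hasDerivAt))
  have hGwd : HasDerivAt (fun t => deriv p₁ t * f t + p₁ t * deriv f t) (Gv f p₁ x) x := by
    have := (((hp1d2 x hx).hasDerivAt).mul ((hf1 x hx).hasDerivAt)).add
      (((hp1d x hx).hasDerivAt).mul ((hf2 x hx).hasDerivAt))
    refine this.congr_deriv ?_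
    simp only [Gv]; ring
  have hq1d : HasDerivAt (fun t => deriv p₁ t) (deriv (deriv p₁) x) x :=
    (hp1d2 x hx).hasDerivAt
  have hnum : HasDerivAt
      (fun t => (deriv p₁ t * f t + p₁ t * deriv f t) * (p₁ t + p₂ y)
        - (p₁ t * f t + p₂ y * f y) * deriv p₁ t)
      ((Gv f p₁ x * (p₁ x + p₂ y) + (deriv p₁ x * f x + p₁ x * deriv f x) * deriv p₁ x)
        - ((deriv p₁ x * f x + p₁ x * deriv f x) * deriv p₁ x
          + (p₁ x * f x + p₂ y * f y) * deriv (deriv p₁) x)) x :=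
    (hGwd.mul hSd).sub (hNd.mul hq1d)
  have hden : HasDerivAt (fun t => (p₁ t + p₂ y) ^ 2)
      (2 * (p₁ x + p₂ y) ^ 1 * deriv p₁ x) x := by
    have := hSd.fun_pow 2
    simpa using this
  have hdiv := hnum.div hden (pow_ne_zero 2 hS)
  simp only [G10, G20, SS, NN, Gc, Gw]
  refine hdiv.congr_deriv ?_
  simp only [Gv]
  field_simp
  ring

include hf1 hf2 hp hp1d hp1d2 hp2d hx hy in
lemma hasDerivAt_G11_x :
    HasDerivAt (fun t => G11 f p₁ p₂ t y) (G21 f p₁ p₂ x y) x := by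
  have hS := SS_ne hp hx hy
  rw [SS] at hS
  have hSd : HasDerivAt (fun t => p₁ t + p₂ y) (deriv p₁ x) x :=
    HasDerivAt.add_const _ (hp1d x hx).hasDerivAt
  have hNd : HasDerivAt (fun t => p₁ t * f t + p₂ y * f y)
      (deriv p₁ x * f x + p₁ x * deriv f x) x :=
    HasDerivAt.add_const _ (((hp1d x hx).hasDerivAt).mul ((hf1 x hx).hasDerivAt))
  have hGwd : HasDerivAt (fun t => deriv p₁ t * f t + p₁ t * deriv f t) (Gv f p₁ x) x := by
    have := (((hp1d2 x hx).hasDerivAt).mul ((hf1 x hx).hasDerivAt)).add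
      (((hp1d x hx).hasDerivAt).mul ((hf2 x hx).hasDerivAt))
    refine this.congr_deriv ?_
    simp only [Gv]; ring
  have hq1d : HasDerivAt (fun t => deriv p₁ t) (deriv (deriv p₁) x) x :=
    (hp1d2 x hx).hasDerivAt
  -- numerator: Gn as a function of t
  have hA : HasDerivAt
      (fun t => Gc f p₂ y * deriv p₁ t - (deriv p₁ t * f t + p₁ t * deriv f t) * deriv p₂ y)
      (Gc f p₂ y * deriv (deriv p₁) x - Gv f p₁ x * deriv p₂ y) x :=
    (hq1d.const_mul _).sub (hGwd.mul_const _)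
  have hB : HasDerivAt
      (fun t => Gc f p₂ y * (p₁ t + p₂ y) - (p₁ t * f t + p₂ y * f y) * deriv p₂ y)
      (Gc f p₂ y * deriv p₁ x - (deriv p₁ x * f x + p₁ x * deriv f x) * deriv p₂ y) x :=
    (hSd.const_mul _).sub (hNd.mul_const _)
  have hnum : HasDerivAt
      (fun t => (Gc f p₂ y * deriv p₁ t - (deriv p₁ t * f t + p₁ t * deriv f t) * deriv p₂ y)
          * (p₁ t + p₂ y)
        - 2 * deriv p₁ t
          * (Gc f p₂ y * (p₁ t + p₂ y) - (p₁ t * f t + p₂ y * f y) * deriv p₂ y))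
      (((Gc f p₂ y * deriv (deriv p₁) x - Gv f p₁ x * deriv p₂ y) * (p₁ x + p₂ y)
          + (Gc f p₂ y * deriv p₁ x - (deriv p₁ x * f x + p₁ x * deriv f x) * deriv p₂ y)
            * deriv p₁ x)
        - ((2 * deriv (deriv p₁) x)
            * (Gc f p₂ y * (p₁ x + p₂ y) - (p₁ x * f x + p₂ y * f y) * deriv p₂ y)
          + (2 * deriv p₁ x)
            * (Gc f p₂ y * deriv p₁ x
              - (deriv p₁ x * f x + p₁ x * deriv f x) * deriv p₂ y))) x :=
    (hA.mul hSd).sub ((hq1d.const_mul 2).mul hB)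
  have hden : HasDerivAt (fun t => (p₁ t + p₂ y) ^ 3)
      (3 * (p₁ x + p₂ y) ^ 2 * deriv p₁ x) x := by
    have := hSd.fun_pow 3
    simpa using this
  have hdiv := hnum.div hden (pow_ne_zero 3 hS)
  simp only [G11, G21, Gn, Gnp, SS, NN, Gw]
  refine hdiv.congr_deriv ?_
  simp only [Gv]
  field_simp
  ring

end GDeriv
noncomputable def B2f (I : Set ℝ) (f p₁ p₂ : ℝ → ℝ) (x y : ℝ) : ℝ :=
  Hh2 I f (gg f p₁ p₂ x y) * G10 f p₁ p₂ x y * G01 f p₁ p₂ x y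
    + Hh1 I f (gg f p₁ p₂ x y) * G11 f p₁ p₂ x y

noncomputable def B3f (I : Set ℝ) (f p₁ p₂ : ℝ → ℝ) (x y : ℝ) : ℝ :=
  Hh3 I f (gg f p₁ p₂ x y) * G10 f p₁ p₂ x y ^ 2 * G01 f p₁ p₂ x y
    + Hh2 I f (gg f p₁ p₂ x y) * (G20 f p₁ p₂ x y * G01 f p₁ p₂ x y
        + 2 * G10 f p₁ p₂ x y * G11 f p₁ p₂ x y)
    + Hh1 I f (gg f p₁ p₂ x y) * G21 f p₁ p₂ x y

section BDeriv

variable {I : Set ℝ} {f p₁ p₂ : ℝ → ℝ}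
variable (hIopen : IsOpen I) (hIconn : I.OrdConnected)
  (hf1 : ∀ x ∈ I, DifferentiableAt ℝ f x)
  (hf2 : ∀ x ∈ I, DifferentiableAt ℝ (deriv f) x)
  (hf3 : ∀ x ∈ I, DifferentiableAt ℝ (deriv (deriv f)) x)
  (hf' : ∀ x ∈ I, deriv f x ≠ 0)
  (hp : ∀ x ∈ I, 0 < p₁ x ∧ 0 < p₂ x)
  (hp1d : ∀ x ∈ I, DifferentiableAt ℝ p₁ x)
  (hp1d2 : ∀ x ∈ I, DifferentiableAt ℝ (deriv p₁) x)
  (hp2d : ∀ x ∈ I, DifferentiableAt ℝ p₂ x)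
  (hp2d2 : ∀ x ∈ I, DifferentiableAt ℝ (deriv p₂) x)
  {x y : ℝ} (hx : x ∈ I) (hy : y ∈ I)

include hIopen hIconn hf1 hf' hp hp2d hx hy in
lemma pd2_eq : pd2 (bajMean I f p₁ p₂) x y
    = Hh1 I f (gg f p₁ p₂ x y) * G01 f p₁ p₂ x y := by
  obtain ⟨c, hcI, hfc⟩ := gg_mem hIconn hf1 hp hx hy
  have hh : HasDerivAt (hInv I f) ((deriv f c)⁻¹) (f c) :=
    hasDerivAt_hInv hIopen hIconn hf1 hf' hcI
  rw [hfc] at hh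
  have hcomp : HasDerivAt (fun t => bajMean I f p₁ p₂ x t)
      ((deriv f c)⁻¹ * G01 f p₁ p₂ x y) y :=
    hh.comp y (hasDerivAt_gg_y hf1 hp hp2d hx hy)
  rw [pd2, hcomp.deriv, ← hfc, Hh1_eq hIconn hf1 hf' hcI]

include hIopen hIconn hf1 hf2 hf' hp hp1d hp2d hx hy in
lemma hasDerivAt_B1 :
    HasDerivAt (fun t => Hh1 I f (gg f p₁ p₂ t y) * G01 f p₁ p₂ t y)
      (B2f I f p₁ p₂ x y) x := by
  obtain ⟨c, hcI, hfc⟩ := gg_mem hIconn hf1 hp hx hy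
  have hH1 := hasDerivAt_Hh1 hIopen hIconn hf1 hf2 hf' hcI
  rw [hfc] at hH1
  have hcomp : HasDerivAt (fun t => Hh1 I f (gg f p₁ p₂ t y))
      (Hh2 I f (gg f p₁ p₂ x y) * G10 f p₁ p₂ x y) x :=
    by have := hH1.comp x (hasDerivAt_gg_x hf1 hp hp1d hx hy); exact this
  have hres : HasDerivAt (fun t => Hh1 I f (gg f p₁ p₂ t y) * G01 f p₁ p₂ t y)
      (Hh2 I f (gg f p₁ p₂ x y) * G10 f p₁ p₂ x y * G01 f p₁ p₂ x y
        + Hh1 I f (gg f p₁ p₂ x y) * G11 f p₁ p₂ x y) x :=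
    hcomp.mul (hasDerivAt_G01_x hf1 hp hp1d hp2d hx hy)
  exact hres

include hIopen hIconn hf1 hf2 hf3 hf' hp hp1d hp1d2 hp2d hx hy in
lemma hasDerivAt_B2 :
    HasDerivAt (fun t => B2f I f p₁ p₂ t y) (B3f I f p₁ p₂ x y) x := by
  obtain ⟨c, hcI, hfc⟩ := gg_mem hIconn hf1 hp hx hy
  have hH1 := hasDerivAt_Hh1 hIopen hIconn hf1 hf2 hf' hcI
  have hH2 := hasDerivAt_Hh2 hIopen hIconn hf1 hf2 hf3 hf' hcI
  rw [hfc] at hH1 hH2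
  have hgx := hasDerivAt_gg_x hf1 hp hp1d hx hy
  have hH1c : HasDerivAt (fun t => Hh1 I f (gg f p₁ p₂ t y))
      (Hh2 I f (gg f p₁ p₂ x y) * G10 f p₁ p₂ x y) x := by have := hH1.comp x hgx; exact this
  have hH2c : HasDerivAt (fun t => Hh2 I f (gg f p₁ p₂ t y))
      (Hh3 I f (gg f p₁ p₂ x y) * G10 f p₁ p₂ x y) x := by have := hH2.comp x hgx; exact this
  have hu : HasDerivAt (fun t => Hh2 I f (gg f p₁ p₂ t y) * G10 f p₁ p₂ t y)
      (Hh3 I f (gg f p₁ p₂ x y) * G10 f p₁ p₂ x y * G10 f p₁ p₂ x y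
        + Hh2 I f (gg f p₁ p₂ x y) * G20 f p₁ p₂ x y) x :=
    hH2c.mul (hasDerivAt_G10_x hf1 hf2 hp hp1d hp1d2 hx hy)
  have ht1 : HasDerivAt
      (fun t => Hh2 I f (gg f p₁ p₂ t y) * G10 f p₁ p₂ t y * G01 f p₁ p₂ t y)
      ((Hh3 I f (gg f p₁ p₂ x y) * G10 f p₁ p₂ x y * G10 f p₁ p₂ x y
          + Hh2 I f (gg f p₁ p₂ x y) * G20 f p₁ p₂ x y) * G01 f p₁ p₂ x y
        + Hh2 I f (gg f p₁ p₂ x y) * G10 f p₁ p₂ x y * G11 f p₁ p₂ x y) x :=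
    hu.mul (hasDerivAt_G01_x hf1 hp hp1d hp2d hx hy)
  have ht2 : HasDerivAt (fun t => Hh1 I f (gg f p₁ p₂ t y) * G11 f p₁ p₂ t y)
      (Hh2 I f (gg f p₁ p₂ x y) * G10 f p₁ p₂ x y * G11 f p₁ p₂ x y
        + Hh1 I f (gg f p₁ p₂ x y) * G21 f p₁ p₂ x y) x :=
    hH1c.mul (hasDerivAt_G11_x hf1 hf2 hp hp1d hp1d2 hp2d hx hy)
  have htot := ht1.add ht2
  have hfun : (fun t => B2f I f p₁ p₂ t y)
      = fun t => Hh2 I f (gg f p₁ p₂ t y) * G10 f p₁ p₂ t y * G01 f p₁ p₂ t y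
          + Hh1 I f (gg f p₁ p₂ t y) * G11 f p₁ p₂ t y := rfl
  rw [hfun]
  refine htot.congr_deriv ?_
  simp only [B3f]; ring

include hIopen hIconn hf1 hf2 hf' hp hp1d hp2d hx hy in
lemma pd12_eq : pd1 (pd2 (bajMean I f p₁ p₂)) x y = B2f I f p₁ p₂ x y := by
  have heq : (fun t => pd2 (bajMean I f p₁ p₂) t y)
      =ᶠ[nhds x] fun t => Hh1 I f (gg f p₁ p₂ t y) * G01 f p₁ p₂ t y :=
    Filter.eventually_of_mem (hIopen.mem_nhds hx)
      (fun t ht => pd2_eq hIopen hIconn hf1 hf' hp hp2d ht hy)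
  rw [pd1, heq.deriv_eq,
    (hasDerivAt_B1 hIopen hIconn hf1 hf2 hf' hp hp1d hp2d hx hy).deriv]

end BDeriv

section RHSDeriv

variable {I : Set ℝ} {f p₁ p₂ : ℝ → ℝ}
variable (hIopen : IsOpen I)
  (hf2 : ∀ x ∈ I, DifferentiableAt ℝ (deriv f) x)
  (hf3 : ∀ x ∈ I, DifferentiableAt ℝ (deriv (deriv f)) x)
  (hf' : ∀ x ∈ I, deriv f x ≠ 0)
  (hp : ∀ x ∈ I, 0 < p₁ x ∧ 0 < p₂ x)
  (hp1d : ∀ x ∈ I, DifferentiableAt ℝ p₁ x)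
  (hp1d2 : ∀ x ∈ I, DifferentiableAt ℝ (deriv p₁) x)
  (hp2d : ∀ x ∈ I, DifferentiableAt ℝ p₂ x)
  (hp2d2 : ∀ x ∈ I, DifferentiableAt ℝ (deriv p₂) x)
  {x : ℝ} (hx : x ∈ I)

noncomputable def Ef (p₁ p₂ : ℝ → ℝ) (x : ℝ) : ℝ :=
  ((deriv p₁ x - deriv p₂ x) * (p₁ x + p₂ x)
    - (p₁ x - p₂ x) * (deriv p₁ x + deriv p₂ x)) / (p₁ x + p₂ x) ^ 2

include hp hp1d hp2d hx in
lemma deriv_ratio : deriv (fun t => (p₁ t - p₂ t) / (p₁ t + p₂ t)) x = Ef p₁ p₂ x := by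
  have hS : p₁ x + p₂ x ≠ 0 := ne_of_gt (add_pos (hp x hx).1 (hp x hx).2)
  exact (((hp1d x hx).hasDerivAt.sub (hp2d x hx).hasDerivAt).div
    ((hp1d x hx).hasDerivAt.add (hp2d x hx).hasDerivAt) hS).deriv

include hp hp1d hp1d2 hp2d hp2d2 hx in
lemma hasDerivAt_Ef : HasDerivAt (Ef p₁ p₂)
    ((((deriv (deriv p₁) x - deriv (deriv p₂) x) * (p₁ x + p₂ x)
        - (p₁ x - p₂ x) * (deriv (deriv p₁) x + deriv (deriv p₂) x)) * (p₁ x + p₂ x)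
      - 2 * (deriv p₁ x + deriv p₂ x)
        * ((deriv p₁ x - deriv p₂ x) * (p₁ x + p₂ x)
          - (p₁ x - p₂ x) * (deriv p₁ x + deriv p₂ x))) / (p₁ x + p₂ x) ^ 3) x := by
  have hS : p₁ x + p₂ x ≠ 0 := ne_of_gt (add_pos (hp x hx).1 (hp x hx).2)
  have hSd : HasDerivAt (fun t => p₁ t + p₂ t) (deriv p₁ x + deriv p₂ x) x :=
    (hp1d x hx).hasDerivAt.add (hp2d x hx).hasDerivAt
  have hnum : HasDerivAt
      (fun t => (deriv p₁ t - deriv p₂ t) * (p₁ t + p₂ t)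
        - (p₁ t - p₂ t) * (deriv p₁ t + deriv p₂ t))
      (((deriv (deriv p₁) x - deriv (deriv p₂) x) * (p₁ x + p₂ x)
          + (deriv p₁ x - deriv p₂ x) * (deriv p₁ x + deriv p₂ x))
        - ((deriv p₁ x - deriv p₂ x) * (deriv p₁ x + deriv p₂ x)
          + (p₁ x - p₂ x) * (deriv (deriv p₁) x + deriv (deriv p₂) x))) x :=
    ((((hp1d2 x hx).hasDerivAt.sub (hp2d2 x hx).hasDerivAt).mul hSd)).sub
      (((hp1d x hx).hasDerivAt.sub (hp2d x hx).hasDerivAt).mul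
        ((hp1d2 x hx).hasDerivAt.add (hp2d2 x hx).hasDerivAt))
  have hden : HasDerivAt (fun t => (p₁ t + p₂ t) ^ 2)
      (2 * (p₁ x + p₂ x) ^ 1 * (deriv p₁ x + deriv p₂ x)) x := by
    have := hSd.fun_pow 2
    simpa using this
  have hdiv := hnum.div hden (pow_ne_zero 2 hS)
  have hfun : Ef p₁ p₂ = fun t => ((deriv p₁ t - deriv p₂ t) * (p₁ t + p₂ t)
      - (p₁ t - p₂ t) * (deriv p₁ t + deriv p₂ t)) / (p₁ t + p₂ t) ^ 2 := rfl
  rw [hfun]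
  refine hdiv.congr_deriv ?_
  field_simp
  ring

include hp hp1d hp2d hx in
lemma deriv_pp : deriv (fun s => p₁ s * p₂ s) x = deriv p₁ x * p₂ x + p₁ x * deriv p₂ x :=
  ((hp1d x hx).hasDerivAt.mul (hp2d x hx).hasDerivAt).deriv

noncomputable def Ff (f p₁ p₂ : ℝ → ℝ) (t : ℝ) : ℝ :=
  p₁ t * p₂ t / (p₁ t + p₂ t) ^ 2
    * ((deriv p₁ t * p₂ t + p₁ t * deriv p₂ t) / (p₁ t * p₂ t)
      + deriv (deriv f) t / deriv f t)

include hf2 hf3 hf' hp hp1d hp1d2 hp2d hp2d2 hx in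
lemma hasDerivAt_Ff : HasDerivAt (Ff f p₁ p₂)
    (((deriv p₁ x * p₂ x + p₁ x * deriv p₂ x) * (p₁ x + p₂ x) ^ 2
        - p₁ x * p₂ x * (2 * (p₁ x + p₂ x) * (deriv p₁ x + deriv p₂ x))) / (p₁ x + p₂ x) ^ 4
      * ((deriv p₁ x * p₂ x + p₁ x * deriv p₂ x) / (p₁ x * p₂ x)
        + deriv (deriv f) x / deriv f x)
    + p₁ x * p₂ x / (p₁ x + p₂ x) ^ 2
      * (((deriv (deriv p₁) x * p₂ x + 2 * (deriv p₁ x * deriv p₂ x)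
            + p₁ x * deriv (deriv p₂) x) * (p₁ x * p₂ x)
          - (deriv p₁ x * p₂ x + p₁ x * deriv p₂ x) ^ 2) / (p₁ x * p₂ x) ^ 2
        + (deriv (deriv (deriv f)) x * deriv f x - deriv (deriv f) x ^ 2)
            / deriv f x ^ 2)) x := by
  have hS : p₁ x + p₂ x ≠ 0 := ne_of_gt (add_pos (hp x hx).1 (hp x hx).2)
  have hpp : p₁ x * p₂ x ≠ 0 := mul_ne_zero (ne_of_gt (hp x hx).1) (ne_of_gt (hp x hx).2)
  have hf1x : deriv f x ≠ 0 := hf' x hx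
  have hp1x : p₁ x ≠ 0 := ne_of_gt (hp x hx).1
  have hp2x : p₂ x ≠ 0 := ne_of_gt (hp x hx).2
  have hSd : HasDerivAt (fun t => p₁ t + p₂ t) (deriv p₁ x + deriv p₂ x) x :=
    (hp1d x hx).hasDerivAt.add (hp2d x hx).hasDerivAt
  have hppd : HasDerivAt (fun t => p₁ t * p₂ t)
      (deriv p₁ x * p₂ x + p₁ x * deriv p₂ x) x :=
    (hp1d x hx).hasDerivAt.mul (hp2d x hx).hasDerivAt
  have hden : HasDerivAt (fun t => (p₁ t + p₂ t) ^ 2)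
      (2 * (p₁ x + p₂ x) ^ 1 * (deriv p₁ x + deriv p₂ x)) x := by
    have := hSd.fun_pow 2
    simpa using this
  have hu := hppd.div hden (pow_ne_zero 2 hS)
  have hnum2 : HasDerivAt (fun t => deriv p₁ t * p₂ t + p₁ t * deriv p₂ t)
      ((deriv (deriv p₁) x * p₂ x + deriv p₁ x * deriv p₂ x)
        + (deriv p₁ x * deriv p₂ x + p₁ x * deriv (deriv p₂) x)) x :=
    ((hp1d2 x hx).hasDerivAt.mul (hp2d x hx).hasDerivAt).add
      ((hp1d x hx).hasDerivAt.mul (hp2d2 x hx).hasDerivAt)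
  have hv1 := hnum2.div hppd hpp
  have hv2 := (hf3 x hx).hasDerivAt.div (hf2 x hx).hasDerivAt hf1x
  have htot := hu.mul (hv1.add hv2)
  have hfun : Ff f p₁ p₂ = fun t => p₁ t * p₂ t / (p₁ t + p₂ t) ^ 2
      * ((deriv p₁ t * p₂ t + p₁ t * deriv p₂ t) / (p₁ t * p₂ t)
        + deriv (deriv f) t / deriv f t) := rfl
  rw [hfun]
  refine htot.congr_deriv ?_
  simp only [Pi.div_apply, Pi.add_apply]
  field_simp
  ring

end RHSDeriv

set_option maxHeartbeats 4000000 in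
theorem stmt7 (I : Set ℝ) (hIopen : IsOpen I) (hIne : I.Nonempty) (hIconn : I.OrdConnected)
    (f p₁ p₂ : ℝ → ℝ)
    (hf1 : ∀ x ∈ I, DifferentiableAt ℝ f x)
    (hf2 : ∀ x ∈ I, DifferentiableAt ℝ (deriv f) x)
    (hf3 : ∀ x ∈ I, DifferentiableAt ℝ (deriv (deriv f)) x)
    (hf' : ∀ x ∈ I, deriv f x ≠ 0)
    (hp : ∀ x ∈ I, 0 < p₁ x ∧ 0 < p₂ x)
    (hp1d : ∀ x ∈ I, DifferentiableAt ℝ p₁ x)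
    (hp1d2 : ∀ x ∈ I, DifferentiableAt ℝ (deriv p₁) x)
    (hp2d : ∀ x ∈ I, DifferentiableAt ℝ p₂ x)
    (hp2d2 : ∀ x ∈ I, DifferentiableAt ℝ (deriv p₂) x) :
    -- the third-order partial derivative `∂₁²∂₂ A_{f,p}` exists on `I²` ...
    (∀ x ∈ I, ∀ y ∈ I,
      DifferentiableAt ℝ (fun t => pd1 (pd2 (bajMean I f p₁ p₂)) t y) x) ∧
    -- ... and at every diagonal point it equals the stated expression
    (∀ x ∈ I, pd1 (pd1 (pd2 (bajMean I f p₁ p₂))) x x =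
      -(1 / 4) * deriv (deriv (fun t => (p₁ t - p₂ t) / (p₁ t + p₂ t))) x
      - (3 * (p₁ x + p₂ x) * (p₁ x - p₂ x) / (16 * (p₁ x * p₂ x))) *
          (deriv (fun t => (p₁ t - p₂ t) / (p₁ t + p₂ t)) x) ^ 2
      - (1 / 2) * deriv (fun t => (p₁ t * p₂ t / (p₁ t + p₂ t) ^ 2) *
          (deriv (fun s => p₁ s * p₂ s) t / (p₁ t * p₂ t) +
            deriv (deriv f) t / deriv f t)) x
      + (3 * (p₁ x * p₂ x) / (4 * (p₁ x + p₂ x) ^ 2)) *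
          ((p₁ x - p₂ x) / (p₁ x + p₂ x)) *
          (deriv (fun t => p₁ t * p₂ t) x / (p₁ x * p₂ x) +
            deriv (deriv f) x / deriv f x) ^ 2
      - (p₁ x * p₂ x / (2 * (p₁ x + p₂ x) ^ 2)) *
          ((p₁ x - p₂ x) / (p₁ x + p₂ x)) * schwarzian f x) := by
  constructor
  · intro x hx y hy
    have heq : (fun t => pd1 (pd2 (bajMean I f p₁ p₂)) t y)
        =ᶠ[nhds x] fun t => B2f I f p₁ p₂ t y :=
      Filter.eventually_of_mem (hIopen.mem_nhds hx)
        (fun t ht => pd12_eq hIopen hIconn hf1 hf2 hf' hp hp1d hp2d ht hy)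
    exact (hasDerivAt_B2 hIopen hIconn hf1 hf2 hf3 hf' hp hp1d hp1d2 hp2d
      hx hy).differentiableAt.congr_of_eventuallyEq heq
  · intro x hx
    have heq : (fun t => pd1 (pd2 (bajMean I f p₁ p₂)) t x)
        =ᶠ[nhds x] fun t => B2f I f p₁ p₂ t x :=
      Filter.eventually_of_mem (hIopen.mem_nhds hx)
        (fun t ht => pd12_eq hIopen hIconn hf1 hf2 hf' hp hp1d hp2d ht hx)
    have hlhs : pd1 (pd1 (pd2 (bajMean I f p₁ p₂))) x x = B3f I f p₁ p₂ x x := by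
      rw [pd1, heq.deriv_eq,
        (hasDerivAt_B2 hIopen hIconn hf1 hf2 hf3 hf' hp hp1d hp1d2 hp2d hx hx).deriv]
    rw [hlhs]
    have h1 : deriv (fun t => (p₁ t - p₂ t) / (p₁ t + p₂ t)) =ᶠ[nhds x] Ef p₁ p₂ :=
      Filter.eventually_of_mem (hIopen.mem_nhds hx)
        (fun t ht => deriv_ratio hp hp1d hp2d ht)
    have h2 : (fun t => (p₁ t * p₂ t / (p₁ t + p₂ t) ^ 2) *
          (deriv (fun s => p₁ s * p₂ s) t / (p₁ t * p₂ t) +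
            deriv (deriv f) t / deriv f t)) =ᶠ[nhds x] Ff f p₁ p₂ :=
      Filter.eventually_of_mem (hIopen.mem_nhds hx)
        (fun t ht => by simp only [Ff]; rw [deriv_pp hp hp1d hp2d ht])
    rw [h1.deriv_eq, (hasDerivAt_Ef hp hp1d hp1d2 hp2d hp2d2 hx).deriv,
      h2.deriv_eq, (hasDerivAt_Ff hf2 hf3 hf' hp hp1d hp1d2 hp2d hp2d2 hx).deriv,
      deriv_ratio hp hp1d hp2d hx, deriv_pp hp hp1d hp2d hx, schwarzian]
    have hgd : gg f p₁ p₂ x x = f x := by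
      have hS : p₁ x + p₂ x ≠ 0 := ne_of_gt (add_pos (hp x hx).1 (hp x hx).2)
      rw [gg]; field_simp
    rw [B3f, hgd, Hh1_eq hIconn hf1 hf' hx, Hh2_eq hIconn hf1 hf' hx,
      Hh3_eq hIconn hf1 hf' hx]
    have hS : p₁ x + p₂ x ≠ 0 := ne_of_gt (add_pos (hp x hx).1 (hp x hx).2)
    have hp1x : p₁ x ≠ 0 := ne_of_gt (hp x hx).1
    have hp2x : p₂ x ≠ 0 := ne_of_gt (hp x hx).2
    have hf1x : deriv f x ≠ 0 := hf' x hx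
    simp only [G01, G10, G11, G20, G21, Gn, Gnp, SS, NN, Gc, Gw, Gv, Ef]
    field_simp
    ring
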